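/- arXiv:2406.14506 — 3 statements merged into one kernel-verified Lean document; each statement's English description precedes it below -/
import Mathlib

section
/- Fix k ∈ ℕ, α ∈ (0,1), and ε, x̄ ∈ [0,1]. For any nonnegative reals x₁,…,x_k with Σᵢ xᵢ = x̄ and αx̄ < 1, we have ∏_{i=1}^k (1 + ε·α·xᵢ/(1 - α·Σ_{j≤i} x_j)) ≤ 1 + ε·α·x̄/(1 - α·x̄). -/
lemma aux_step (ε α S t : ℝ) (hε0 : 0 ≤ ε) (hε1 : ε ≤ 1) (hα : 0 < α) (hS : 0 ≤ S) (ht : 0 ≤ t)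
    (h1 : α * (S + t) < 1) :
    (1 + ε * α * S / (1 - α * S)) * (1 + ε * α * t / (1 - α * (S + t)))
      ≤ 1 + ε * α * (S + t) / (1 - α * (S + t)) := by
  have h1' : (0:ℝ) < 1 - α * S := by nlinarith [mul_nonneg hα.le ht]
  have h2' : (0:ℝ) < 1 - α * (S + t) := by linarith
  have e1 : 1 + ε * α * S / (1 - α * S) = (1 - α * S + ε * α * S) / (1 - α * S) := by
    field_simp
  have e2 : 1 + ε * α * t / (1 - α * (S + t))
      = (1 - α * (S + t) + ε * α * t) / (1 - α * (S + t)) := by field_simp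
  have e3 : 1 + ε * α * (S + t) / (1 - α * (S + t))
      = (1 - α * (S + t) + ε * α * (S + t)) / (1 - α * (S + t)) := by field_simp
  rw [e1, e2, e3, div_mul_div_comm, div_le_div_iff₀ (by positivity) h2']
  nlinarith [mul_nonneg (mul_nonneg (mul_nonneg (mul_nonneg hε0 (sub_nonneg.2 hε1))
    (mul_nonneg hα.le hS)) (mul_nonneg hα.le ht)) h2'.le]

lemma aux_range (α ε : ℝ) (hα : 0 < α) (hε0 : 0 ≤ ε) (hε1 : ε ≤ 1)
    (x : ℕ → ℝ) (hx : ∀ i, 0 ≤ x i) :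
    ∀ n : ℕ, α * ∑ i ∈ Finset.range n, x i < 1 →
    ∏ i ∈ Finset.range n, (1 + ε * α * x i / (1 - α * ∑ j ∈ Finset.range (i+1), x j))
      ≤ 1 + ε * α * (∑ i ∈ Finset.range n, x i) / (1 - α * ∑ i ∈ Finset.range n, x i) := by
  intro n
  induction n with
  | zero => simp
  | succ n ih =>
    intro h
    have hSn : 0 ≤ ∑ i ∈ Finset.range n, x i := Finset.sum_nonneg fun i _ => hx i
    have hstep : ∑ i ∈ Finset.range (n+1), x i = (∑ i ∈ Finset.range n, x i) + x n :=
      Finset.sum_range_succ x n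
    have hSn1 : α * ∑ i ∈ Finset.range n, x i < 1 := by
      nlinarith [mul_nonneg hα.le (hx n)]
    have ih' := ih hSn1
    have h2' : (0:ℝ) < 1 - α * ∑ j ∈ Finset.range (n+1), x j := by linarith
    have hfac : 0 ≤ 1 + ε * α * x n / (1 - α * ∑ j ∈ Finset.range (n+1), x j) := by
      have : 0 ≤ ε * α * x n / (1 - α * ∑ j ∈ Finset.range (n+1), x j) :=
        div_nonneg (mul_nonneg (mul_nonneg hε0 hα.le) (hx n)) h2'.le
      linarith
    rw [Finset.prod_range_succ, hstep]
    calc (∏ i ∈ Finset.range n, (1 + ε * α * x i / (1 - α * ∑ j ∈ Finset.range (i+1), x j)))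
          * (1 + ε * α * x n / (1 - α * ((∑ i ∈ Finset.range n, x i) + x n)))
        ≤ (1 + ε * α * (∑ i ∈ Finset.range n, x i) / (1 - α * ∑ i ∈ Finset.range n, x i))
          * (1 + ε * α * x n / (1 - α * ((∑ i ∈ Finset.range n, x i) + x n))) := by
          apply mul_le_mul_of_nonneg_right ih'
          rw [hstep] at hfac; exact hfac
      _ ≤ 1 + ε * α * ((∑ i ∈ Finset.range n, x i) + x n)
            / (1 - α * ((∑ i ∈ Finset.range n, x i) + x n)) := by
          apply aux_step ε α _ _ hε0 hε1 hα hSn (hx n)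
          rw [hstep] at h; exact h

theorem product_upper_bound (k : ℕ) (α ε xbar : ℝ)
    (hα : α ∈ Set.Ioo (0:ℝ) 1) (hε : ε ∈ Set.Icc (0:ℝ) 1) (hxbar : xbar ∈ Set.Icc (0:ℝ) 1)
    (x : Fin k → ℝ) (hx : ∀ i, 0 ≤ x i) (hsum : ∑ i, x i = xbar)
    (hdenom : α * xbar < 1) :
    ∏ i : Fin k, (1 + ε * α * x i / (1 - α * ∑ j ∈ Finset.Iic i, x j))
      ≤ 1 + ε * α * xbar / (1 - α * xbar) := by
  set y : ℕ → ℝ := fun n => if h : n < k then x ⟨n, h⟩ else 0 with hy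
  have hy0 : ∀ i, 0 ≤ y i := by
    intro i; simp only [hy]; split
    · exact hx _
    · exact le_refl 0
  have hIic : ∀ i : Fin k, ∑ j ∈ Finset.Iic i, x j = ∑ j ∈ Finset.range (i.val + 1), y j := by
    intro i
    have hr : Finset.range (i.val + 1) = Finset.Iic i.val := by
      ext m; simp [Nat.lt_succ_iff]
    rw [hr, ← Fin.map_valEmbedding_Iic, Finset.sum_map]
    apply Finset.sum_congr rfl
    intro j _
    simp [hy, j.isLt]
  have hsum' : ∑ i ∈ Finset.range k, y i = xbar := by
    rw [← hsum, ← Fin.sum_univ_eq_sum_range]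
    apply Finset.sum_congr rfl
    intro j _
    simp [hy, j.isLt]
  have hprod : ∏ i : Fin k, (1 + ε * α * x i / (1 - α * ∑ j ∈ Finset.Iic i, x j))
      = ∏ i ∈ Finset.range k, (1 + ε * α * y i / (1 - α * ∑ j ∈ Finset.range (i+1), y j)) := by
    rw [← Fin.prod_univ_eq_prod_range]
    apply Finset.prod_congr rfl
    intro j _
    rw [hIic j]
    simp [hy, j.isLt]
  rw [hprod, ← hsum']
  exact aux_range α ε hα.1 hε.1 hε.2 y hy0 k (by rw [hsum']; exact hdenom)
end

section
/- Fix k ∈ ℕ, α ∈ (0,1), and ε, x̄ ∈ [0,1]. For any nonnegative reals x₁,…,x_k with Σᵢ xᵢ = x̄ and αx̄ < 1, we have ∏_{i=1}^k (1 - ε·α·xᵢ/(1 - α·Σ_{j≤i} x_j)) ≥ 1 - ε·α·x̄/(1 - α·x̄). -/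
lemma product_lower_bound_step (α ε s d P : ℝ) (hα0 : 0 < α) (hε0 : 0 ≤ ε) (hε1 : ε ≤ 1)
    (hs0 : 0 ≤ s) (hd0 : 0 ≤ d)
    (hB : 0 < 1 - α * (s + d))
    (h1 : 1 - ε * α * s / (1 - α * s) ≤ P)
    (h2 : P ≤ max 1 (-(1 - ε * α * s / (1 - α * s)))) :
    1 - ε * α * (s + d) / (1 - α * (s + d)) ≤ P * (1 - ε * α * d / (1 - α * (s + d)))
    ∧ P * (1 - ε * α * d / (1 - α * (s + d)))
      ≤ max 1 (-(1 - ε * α * (s + d) / (1 - α * (s + d)))) := by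
  have hA : 0 < 1 - α * s := by nlinarith
  set fs := 1 - ε * α * s / (1 - α * s) with hfs
  set ft := 1 - ε * α * (s + d) / (1 - α * (s + d)) with hft
  set c := 1 - ε * α * d / (1 - α * (s + d)) with hc
  have hABpos : 0 < (1 - α * s) * (1 - α * (s + d)) := mul_pos hA hB
  have fact1 : ft ≤ fs * c := by
    have key : fs * c - ft = ε * α ^ 2 * s * d * (1 + ε) / ((1 - α * s) * (1 - α * (s + d))) := by
      rw [hfs, hft, hc]; field_simp; ring
    have : 0 ≤ fs * c - ft := by
      rw [key]; positivity
    linarith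
  have fact2 : c ≤ 1 := by
    rw [hc]
    have : 0 ≤ ε * α * d / (1 - α * (s + d)) := by positivity
    linarith
  have fact3 : ft ≤ c := by
    have key : c - ft = ε * α * s / (1 - α * (s + d)) := by
      rw [hft, hc]; field_simp; ring
    have : 0 ≤ c - ft := by rw [key]; positivity
    linarith
  have fact4 : ft ≤ fs := by
    have key : fs - ft = ε * α * d / ((1 - α * s) * (1 - α * (s + d))) := by
      rw [hfs, hft]; field_simp; ring
    have : 0 ≤ fs - ft := by rw [key]; positivity
    linarith
  have fact5 : fs < 0 → c < 0 → fs * c ≤ -ft := by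
    intro hfsneg hcneg
    have hp : ε * α * s > 1 - α * s := by
      rw [hfs] at hfsneg
      linarith [(lt_div_iff₀ hA).mp (by linarith : 1 < ε * α * s / (1 - α * s))]
    have hq : ε * α * d > 1 - α * (s + d) := by
      rw [hc] at hcneg
      linarith [(lt_div_iff₀ hB).mp (by linarith : 1 < ε * α * d / (1 - α * (s + d)))]
    have hqle : ε * α * d ≤ α * d := by nlinarith
    have hp0 : 0 ≤ ε * α * s := by positivity
    have key : fs * c + ft =
        ((1 - α * s - ε * α * s) * (1 - α * (s + d) - ε * α * d)
          + (1 - α * s) * (1 - α * (s + d) - ε * α * s - ε * α * d))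
          / ((1 - α * s) * (1 - α * (s + d))) := by
      rw [hfs, hft, hc]; field_simp; ring
    have hnum : (1 - α * s - ε * α * s) * (1 - α * (s + d) - ε * α * d)
          + (1 - α * s) * (1 - α * (s + d) - ε * α * s - ε * α * d) ≤ 0 := by
      nlinarith [mul_nonneg hp0 (by nlinarith : (0:ℝ) ≤ (1 - α * s) + (1 - α * (s + d)) - ε * α * d),
        mul_nonneg hA.le (by linarith : (0:ℝ) ≤ ε * α * d - (1 - α * (s + d)))]
    have : fs * c + ft ≤ 0 := by
      rw [key]
      exact div_nonpos_of_nonpos_of_nonneg hnum hABpos.le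
    linarith
  constructor
  · rcases le_or_gt 0 c with hcpos | hcneg
    · calc ft ≤ fs * c := fact1
        _ ≤ P * c := mul_le_mul_of_nonneg_right h1 hcpos
    · have hPc : max 1 (-fs) * c ≤ P * c := mul_le_mul_of_nonpos_right h2 hcneg.le
      rcases le_or_gt (-fs) 1 with hm | hm
      · rw [max_eq_left hm] at hPc
        linarith [fact3]
      · rw [max_eq_right hm.le] at hPc
        have hfsneg : fs < 0 := by linarith
        have := fact5 hfsneg hcneg
        nlinarith
  · rcases le_or_gt 0 c with hcpos | hcneg
    · have hM0 : (0:ℝ) ≤ max 1 (-fs) := le_trans zero_le_one (le_max_left _ _)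
      calc P * c ≤ max 1 (-fs) * c := mul_le_mul_of_nonneg_right h2 hcpos
        _ ≤ max 1 (-fs) * 1 := mul_le_mul_of_nonneg_left fact2 hM0
        _ = max 1 (-fs) := mul_one _
        _ ≤ max 1 (-ft) := max_le_max le_rfl (by linarith)
    · have hPc : P * c ≤ fs * c := mul_le_mul_of_nonpos_right h1 hcneg.le
      rcases le_or_gt 0 fs with hfs0 | hfsneg
      · have : fs * c ≤ 0 := mul_nonpos_of_nonneg_of_nonpos hfs0 hcneg.le
        calc P * c ≤ fs * c := hPc
          _ ≤ 0 := this
          _ ≤ 1 := zero_le_one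
          _ ≤ max 1 (-ft) := le_max_left _ _
      · calc P * c ≤ fs * c := hPc
          _ ≤ -ft := fact5 hfsneg hcneg
          _ ≤ max 1 (-ft) := le_max_right _ _

lemma product_lower_bound_aux (α ε : ℝ) (hα0 : 0 < α) (hε0 : 0 ≤ ε) (hε1 : ε ≤ 1)
    (y : ℕ → ℝ) (hy : ∀ n, 0 ≤ y n) (k : ℕ)
    (hk : α * ∑ j ∈ Finset.range k, y j < 1) :
    ∀ n, n ≤ k →
      (1 - ε * α * (∑ j ∈ Finset.range n, y j) / (1 - α * ∑ j ∈ Finset.range n, y j)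
        ≤ ∏ i ∈ Finset.range n, (1 - ε * α * y i / (1 - α * ∑ j ∈ Finset.range (i + 1), y j)))
      ∧ ∏ i ∈ Finset.range n, (1 - ε * α * y i / (1 - α * ∑ j ∈ Finset.range (i + 1), y j))
        ≤ max 1 (-(1 - ε * α * (∑ j ∈ Finset.range n, y j)
            / (1 - α * ∑ j ∈ Finset.range n, y j))) := by
  have hS0 : ∀ n, 0 ≤ ∑ j ∈ Finset.range n, y j :=
    fun n => Finset.sum_nonneg fun i _ => hy i
  have hSmono : ∀ m n : ℕ, m ≤ n →
      ∑ j ∈ Finset.range m, y j ≤ ∑ j ∈ Finset.range n, y j := fun m n h =>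
    Finset.sum_le_sum_of_subset_of_nonneg (Finset.range_subset_range.2 h) (fun i _ _ => hy i)
  have hSpos : ∀ n, n ≤ k → 0 < 1 - α * ∑ j ∈ Finset.range n, y j := by
    intro n hn
    have h1 := hSmono n k hn
    nlinarith
  intro n
  induction n with
  | zero => simp
  | succ n ih =>
    intro hn1
    have hn : n ≤ k := Nat.le_of_succ_le hn1
    obtain ⟨ih1, ih2⟩ := ih hn
    have hts : ∑ j ∈ Finset.range (n + 1), y j = (∑ j ∈ Finset.range n, y j) + y n :=
      Finset.sum_range_succ y n
    have hB : 0 < 1 - α * ((∑ j ∈ Finset.range n, y j) + y n) := by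
      rw [← hts]; exact hSpos (n + 1) hn1
    have step := product_lower_bound_step α ε (∑ j ∈ Finset.range n, y j) (y n)
      (∏ i ∈ Finset.range n, (1 - ε * α * y i / (1 - α * ∑ j ∈ Finset.range (i + 1), y j)))
      hα0 hε0 hε1 (hS0 n) (hy n) hB ih1 ih2
    rw [Finset.prod_range_succ, hts]
    exact step

theorem product_lower_bound (k : ℕ) (α ε xbar : ℝ)
    (hα : α ∈ Set.Ioo (0:ℝ) 1) (hε : ε ∈ Set.Icc (0:ℝ) 1) (hxbar : xbar ∈ Set.Icc (0:ℝ) 1)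
    (x : Fin k → ℝ) (hx : ∀ i, 0 ≤ x i) (hsum : ∑ i, x i = xbar)
    (hdenom : α * xbar < 1) :
    ∏ i : Fin k, (1 - ε * α * x i / (1 - α * ∑ j ∈ Finset.Iic i, x j))
      ≥ 1 - ε * α * xbar / (1 - α * xbar) := by
  obtain ⟨hα0, hα1⟩ := hα
  obtain ⟨hε0, hε1⟩ := hε
  set y : ℕ → ℝ := fun n => if h : n < k then x ⟨n, h⟩ else 0 with hy_def
  have hy : ∀ n, 0 ≤ y n := by
    intro n
    simp only [hy_def]
    split
    · exact hx _
    · exact le_rfl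
  have hyval : ∀ i : Fin k, y i.val = x i := by
    intro i
    simp only [hy_def, dif_pos i.isLt, Fin.eta]
  have hsum' : ∑ j ∈ Finset.range k, y j = xbar := by
    rw [← Fin.sum_univ_eq_sum_range y k, ← hsum]
    exact Finset.sum_congr rfl fun i _ => hyval i
  have hIic : ∀ i : Fin k, ∑ j ∈ Finset.Iic i, x j = ∑ j ∈ Finset.range (i.val + 1), y j := by
    intro i
    have h1 : ∑ j ∈ Finset.Iic i, x j = ∑ j ∈ (Finset.Iic i).map Fin.valEmbedding, y j := by
      rw [Finset.sum_map]
      exact Finset.sum_congr rfl fun j _ => (hyval j).symm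
    rw [h1, Fin.map_valEmbedding_Iic]
    apply Finset.sum_congr _ fun _ _ => rfl
    ext m
    simp [Nat.lt_succ_iff]
  have hprod : ∏ i : Fin k, (1 - ε * α * x i / (1 - α * ∑ j ∈ Finset.Iic i, x j))
      = ∏ i ∈ Finset.range k, (1 - ε * α * y i / (1 - α * ∑ j ∈ Finset.range (i + 1), y j)) := by
    rw [← Fin.prod_univ_eq_prod_range
      (fun n => 1 - ε * α * y n / (1 - α * ∑ j ∈ Finset.range (n + 1), y j)) k]
    exact Finset.prod_congr rfl fun i _ => by rw [hyval i, hIic i]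
  have hk : α * ∑ j ∈ Finset.range k, y j < 1 := by rw [hsum']; exact hdenom
  have := (product_lower_bound_aux α ε hα0 hε0 hε1 y hy k hk k le_rfl).1
  rw [hsum'] at this
  rw [hprod]
  exact this
end

section
/- The function q(x,y) = eˣ/(eˣ + eʸ - 1) on [0,1]² satisfies the integral equation q(x,y) = exp(-∫₀ʸ q(z,x) dz), the partial differential equations ∂q/∂y = -q(x,y)·q(y,x) and ∂q/∂x = q(x,y)(1 - q(x,y)), and the boundary conditions q(x,0) = 1 and q(0,y) = e^{-y}. -/
/-- Properties of `q(x,y) = eˣ/(eˣ + eʸ - 1)` on `[0,1]²`: it satisfies the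
integral equation `q(x,y) = exp(-∫₀ʸ q(z,x) dz)`, the partial differential
equations `∂q/∂y = -q(x,y)q(y,x)` and `∂q/∂x = q(x,y)(1-q(x,y))`, and the
boundary conditions `q(x,0) = 1` and `q(0,y) = e^{-y}`. -/
theorem q_two_var_properties :
    ∀ x ∈ Set.Icc (0:ℝ) 1, ∀ y ∈ Set.Icc (0:ℝ) 1,
      (Real.exp x / (Real.exp x + Real.exp y - 1)
        = Real.exp (-∫ z in (0:ℝ)..y, Real.exp z / (Real.exp z + Real.exp x - 1))) ∧
      HasDerivAt (fun y' => Real.exp x / (Real.exp x + Real.exp y' - 1))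
        (-(Real.exp x / (Real.exp x + Real.exp y - 1)
            * (Real.exp y / (Real.exp y + Real.exp x - 1)))) y ∧
      HasDerivAt (fun x' => Real.exp x' / (Real.exp x' + Real.exp y - 1))
        (Real.exp x / (Real.exp x + Real.exp y - 1)
          * (1 - Real.exp x / (Real.exp x + Real.exp y - 1))) x ∧
      Real.exp x / (Real.exp x + Real.exp 0 - 1) = 1 ∧
      Real.exp 0 / (Real.exp 0 + Real.exp y - 1) = Real.exp (-y) := by
  intro x hx y hy
  have hex : (1:ℝ) ≤ Real.exp x := Real.one_le_exp hx.1
  have hey : (1:ℝ) ≤ Real.exp y := Real.one_le_exp hy.1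
  have hpos : ∀ z : ℝ, 0 < Real.exp z + Real.exp x - 1 := fun z => by
    have := Real.exp_pos z; linarith
  have hpos' : ∀ z : ℝ, 0 < Real.exp z + Real.exp y - 1 := fun z => by
    have := Real.exp_pos z; linarith
  have hne : ∀ z : ℝ, Real.exp z + Real.exp x - 1 ≠ 0 := fun z => (hpos z).ne'
  have hne' : ∀ z : ℝ, Real.exp z + Real.exp y - 1 ≠ 0 := fun z => (hpos' z).ne'
  refine ⟨?_, ?_, ?_, ?_, ?_⟩
  · have hderiv : ∀ z : ℝ, HasDerivAt (fun z => Real.log (Real.exp z + Real.exp x - 1))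
        (Real.exp z / (Real.exp z + Real.exp x - 1)) z := fun z =>
      (((Real.hasDerivAt_exp z).add_const _).sub_const 1).log (hne z)
    have hint : (∫ z in (0:ℝ)..y, Real.exp z / (Real.exp z + Real.exp x - 1))
        = Real.log (Real.exp y + Real.exp x - 1) - x := by
      rw [intervalIntegral.integral_eq_sub_of_hasDerivAt (fun z _ => hderiv z) ?_]
      · simp
      · exact (Real.continuous_exp.div
          (by continuity) hne).intervalIntegrable _ _
    rw [hint, neg_sub, Real.exp_sub, Real.exp_log (hpos y), add_comm (Real.exp y)]
  · have hA : HasDerivAt (fun y' => Real.exp x + Real.exp y' - 1) (Real.exp y) y :=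
      ((Real.hasDerivAt_exp y).const_add _).sub_const 1
    have := (hasDerivAt_const y (Real.exp x)).div hA (by
      have := hpos y; intro h; rw [add_comm (Real.exp x)] at h; exact (hne y) h)
    refine this.congr_deriv ?_
    have h1 := hne y
    rw [add_comm (Real.exp y)] 
    field_simp
    ring
  · have hB : HasDerivAt (fun x' => Real.exp x' + Real.exp y - 1) (Real.exp x) x :=
      ((Real.hasDerivAt_exp x).add_const _).sub_const 1
    have := (Real.hasDerivAt_exp x).div hB (hne' x)
    refine this.congr_deriv ?_
    have h1 := hne' x
    field_simp
  · simp [Real.exp_ne_zero]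
  · rw [Real.exp_zero, Real.exp_neg]
    simp
end
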